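/- Let K₁, K₂ : ℝ³×ℝ³ → ℂ satisfy |K₁(x,y)| ≤ c e^{−γ|x−y|}/|x−y| and |K₂(x,y)| ≤ c e^{−γ|x−y|}/|x−y|² for x ≠ y. Then for every integer k ≥ 2 there exists C > 0 such that for all x ≠ y in ℝ³: ∫_{(ℝ³)^k} |K₁(x,z₁) K₂(z₁,z₂) ⋯ K₂(z_k,y)| dz₁⋯dz_k ≤ (C/γ^k) e^{−(γ/2^k)|x−y|}/|x−y|. -/

import Mathlib

open MeasureTheory ENNReal

open Set Metric

set_option maxHeartbeats 1000000

noncomputable section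

abbrev E3 := EuclideanSpace ℝ (Fin 3)

/-- The chain `x, z₁, …, z_k, y` of points: `chain x y z 0 = x`,
`chain x y z i = z_{i}` for `1 ≤ i ≤ k`, and `chain x y z i = y` for `i > k`. -/
def chain (x y : E3) {k : ℕ} (z : Fin k → E3) (i : ℕ) : E3 :=
  if h : 1 ≤ i ∧ i ≤ k then z ⟨i - 1, by omega⟩ else if i = 0 then x else y

lemma dimE3 : Module.finrank ℝ E3 = 3 := by simp

lemma lintegral_radial (g : ℝ → ℝ≥0∞) (hg : Measurable g) :
    ∫⁻ x : E3, g ‖x‖ =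
      (volume : Measure E3).toSphere univ *
        ∫⁻ r in Ioi (0 : ℝ), ENNReal.ofReal (r ^ 2) * g r := by
  have h0 : (volume : Measure E3) {0} = 0 := measure_singleton 0
  have hcompl : ({0}ᶜ : Set E3) =ᵐ[volume] univ := by
    rw [ae_eq_univ, compl_compl]; exact h0
  have step1 : ∫⁻ x : E3, g ‖x‖ = ∫⁻ x in ({0}ᶜ : Set E3), g ‖x‖ := by
    rw [← setLIntegral_univ, setLIntegral_congr hcompl.symm]
  have step2 : ∫⁻ x in ({0}ᶜ : Set E3), g ‖x‖ =
      ∫⁻ x : ({0}ᶜ : Set E3), g ‖(x : E3)‖ ∂((volume : Measure E3).comap Subtype.val) :=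
    (lintegral_subtype_comap (measurableSet_singleton 0).compl _).symm
  have mp := (volume : Measure E3).measurePreserving_homeomorphUnitSphereProd
  rw [dimE3] at mp
  have hmeas : Measurable fun p : sphere (0 : E3) 1 × Ioi (0 : ℝ) => g p.2 :=
    hg.comp (measurable_subtype_coe.comp measurable_snd)
  have step3 : ∫⁻ x : ({0}ᶜ : Set E3), g ‖(x : E3)‖ ∂((volume : Measure E3).comap Subtype.val) =
      ∫⁻ p : sphere (0 : E3) 1 × Ioi (0 : ℝ), g p.2
        ∂((volume : Measure E3).toSphere.prod (Measure.volumeIoiPow (3 - 1))) := by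
    rw [← mp.lintegral_comp hmeas]
    refine lintegral_congr fun x => ?_
    simp
  have step4 : ∫⁻ p : sphere (0 : E3) 1 × Ioi (0 : ℝ), g p.2
        ∂((volume : Measure E3).toSphere.prod (Measure.volumeIoiPow (3 - 1))) =
      (volume : Measure E3).toSphere univ * ∫⁻ r : Ioi (0:ℝ), g r ∂(Measure.volumeIoiPow 2) := by
    rw [lintegral_prod _ hmeas.aemeasurable]
    simp [lintegral_const, mul_comm]
  have step5 : ∫⁻ r : Ioi (0:ℝ), g r ∂(Measure.volumeIoiPow 2) =
      ∫⁻ r in Ioi (0 : ℝ), ENNReal.ofReal (r ^ 2) * g r := by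
    rw [Measure.volumeIoiPow, lintegral_withDensity_eq_lintegral_mul _
      (by exact (measurable_subtype_coe.pow_const 2).ennreal_ofReal :
        Measurable fun r : Ioi (0:ℝ) => ENNReal.ofReal ((r : ℝ) ^ 2))
      (by exact hg.comp measurable_subtype_coe : Measurable fun r : Ioi (0:ℝ) => g (r : ℝ))]
    exact lintegral_subtype_comap measurableSet_Ioi fun r => ENNReal.ofReal (r ^ 2) * g r
  rw [step1, step2, step3, step4, step5]

def I2 (η : ℝ) : ℝ≥0∞ := ∫⁻ u : E3, ENNReal.ofReal (Real.exp (-η * ‖u‖) / ‖u‖ ^ 2)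

lemma I2_lt_top {η : ℝ} (hη : 0 < η) : I2 η < ∞ := by
  have hg : Measurable fun r : ℝ => ENNReal.ofReal (Real.exp (-η * r) / r ^ 2) := by
    fun_prop
  rw [I2, lintegral_radial _ hg]
  have heq : ∫⁻ r in Ioi (0 : ℝ), ENNReal.ofReal (r ^ 2) *
      ENNReal.ofReal (Real.exp (-η * r) / r ^ 2) =
      ∫⁻ r in Ioi (0 : ℝ), ENNReal.ofReal (Real.exp (-η * r)) := by
    refine setLIntegral_congr_fun measurableSet_Ioi (fun r hr => ?_)
    rw [← ENNReal.ofReal_mul (by positivity)]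
    congr 1
    rw [neg_mul]
    rw [mul_comm]
    exact div_mul_cancel₀ _ (pow_ne_zero 2 (ne_of_gt (mem_Ioi.1 hr)))
  rw [heq]
  have hint : IntegrableOn (fun r : ℝ => Real.exp (-η * r)) (Ioi 0) :=
    exp_neg_integrableOn_Ioi 0 hη
  refine ENNReal.mul_lt_top (measure_lt_top _ _) ?_
  exact lt_of_le_of_lt (lintegral_ofReal_le_lintegral_enorm _) hint.2

def Gker (s : ℝ) (x y : E3) : ℝ≥0∞ :=
  ENNReal.ofReal (Real.exp (-s * ‖x - y‖)) / ENNReal.ofReal ‖x - y‖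

def Fker (s : ℝ) (x y : E3) : ℝ≥0∞ :=
  ENNReal.ofReal (Real.exp (-s * ‖x - y‖)) / ENNReal.ofReal (‖x - y‖ ^ 2)

lemma Gker_self (s : ℝ) (x : E3) : Gker s x x = ∞ := by
  simp [Gker, ENNReal.div_zero, Real.exp_pos]

lemma Gker_ne (s : ℝ) {x y : E3} (h : x ≠ y) :
    Gker s x y = ENNReal.ofReal (Real.exp (-s * ‖x - y‖) / ‖x - y‖) := by
  rw [Gker, ENNReal.ofReal_div_of_pos (by simpa [sub_eq_zero] using h)]

lemma Fker_ne (s : ℝ) {x y : E3} (h : x ≠ y) :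
    Fker s x y = ENNReal.ofReal (Real.exp (-s * ‖x - y‖) / ‖x - y‖ ^ 2) := by
  have : (0:ℝ) < ‖x - y‖ := by simpa [sub_eq_zero] using h
  rw [Fker, ENNReal.ofReal_div_of_pos (by positivity)]

lemma Measurable.gker {α : Type*} [MeasurableSpace α] {f h : α → E3}
    (hf : Measurable f) (hh : Measurable h) (s : ℝ) :
    Measurable fun a => Gker s (f a) (h a) := by
  unfold Gker; fun_prop

lemma Measurable.fker {α : Type*} [MeasurableSpace α] {f h : α → E3}
    (hf : Measurable f) (hh : Measurable h) (s : ℝ) :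
    Measurable fun a => Fker s (f a) (h a) := by
  unfold Fker; fun_prop

/-- translation invariance -/
lemma lintegral_I2_shift (η : ℝ) (Y : E3) :
    ∫⁻ z : E3, ENNReal.ofReal (Real.exp (-η * ‖z - Y‖) / ‖z - Y‖ ^ 2) = I2 η := by
  rw [I2, ← lintegral_add_right_eq_self
    (fun u : E3 => ENNReal.ofReal (Real.exp (-η * ‖u‖) / ‖u‖ ^ 2)) (-Y)]
  simp [sub_eq_add_neg]

lemma real_ineq {a b d s g : ℝ} (ha : 0 < a) (hb : 0 < b) (hd : 0 < d)
    (htri : d ≤ a + b) (hs : 0 < s) (hsg : s ≤ g) :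
    Real.exp (-s * a) / a * (Real.exp (-g * b) / b ^ 2) ≤
      Real.exp (-(s / 2) * d) / d *
        (3 / 2 * (Real.exp (-(s / 2) * b) / b ^ 2) +
          1 / 2 * (Real.exp (-(s / 2) * a) / a ^ 2)) := by
  set η := s / 2 with hη
  have hη0 : 0 < η := by positivity
  have e1 : Real.exp (-s * a) * Real.exp (-g * b) ≤
      Real.exp (-η * d) * (Real.exp (-η * a) * Real.exp (-η * b)) := by
    rw [← Real.exp_add, ← Real.exp_add, ← Real.exp_add]
    apply Real.exp_le_exp.2
    nlinarith [mul_le_mul_of_nonneg_left htri hη0.le, mul_le_mul_of_nonneg_right hsg hb.le]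
  have eA1 : Real.exp (-η * a) ≤ 1 := Real.exp_le_one_iff.2 (by nlinarith)
  have eB1 : Real.exp (-η * b) ≤ 1 := Real.exp_le_one_iff.2 (by nlinarith)
  have eA0 : 0 < Real.exp (-η * a) := Real.exp_pos _
  have eB0 : 0 < Real.exp (-η * b) := Real.exp_pos _
  have key : Real.exp (-η * a) * Real.exp (-η * b) * (1 / (a * b ^ 2)) ≤
      (1 / d) * (3 / 2 * (Real.exp (-η * b) / b ^ 2) +
        1 / 2 * (Real.exp (-η * a) / a ^ 2)) := by
    have core : d * (Real.exp (-η * a) * Real.exp (-η * b)) ≤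
        3 / 2 * Real.exp (-η * b) * a + 1 / 2 * Real.exp (-η * a) * b ^ 2 / a := by
      have h2 : a * (Real.exp (-η * a) * Real.exp (-η * b)) ≤ Real.exp (-η * b) * a := by
        nlinarith [mul_le_mul_of_nonneg_right
          (mul_le_mul_of_nonneg_right eA1 eB0.le) ha.le]
      have h3 : b * (Real.exp (-η * a) * Real.exp (-η * b)) ≤
          1 / 2 * Real.exp (-η * b) * a + 1 / 2 * Real.exp (-η * a) * b ^ 2 / a := by
        rw [← mul_le_mul_iff_of_pos_right ha]
        calc b * (Real.exp (-η * a) * Real.exp (-η * b)) * a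
            = b * a * (Real.exp (-η * a) * Real.exp (-η * b)) := by ring
          _ ≤ (a ^ 2 + b ^ 2) / 2 * (Real.exp (-η * a) * Real.exp (-η * b)) := by
              have hab : b * a ≤ (a ^ 2 + b ^ 2) / 2 := by nlinarith [sq_nonneg (a - b)]
              exact mul_le_mul_of_nonneg_right hab (by positivity)
          _ ≤ 1 / 2 * Real.exp (-η * b) * a ^ 2 + 1 / 2 * Real.exp (-η * a) * b ^ 2 := by
              nlinarith [mul_le_mul_of_nonneg_right
                  (mul_le_mul_of_nonneg_right eA1 eB0.le) (sq_nonneg a),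
                mul_le_mul_of_nonneg_right
                  (mul_le_mul_of_nonneg_left eB1 eA0.le) (sq_nonneg b)]
          _ = (1 / 2 * Real.exp (-η * b) * a + 1 / 2 * Real.exp (-η * a) * b ^ 2 / a) * a := by
              field_simp
      nlinarith [mul_le_mul_of_nonneg_right htri (by positivity :
        (0:ℝ) ≤ Real.exp (-η * a) * Real.exp (-η * b))]
    have hlhs : Real.exp (-η * a) * Real.exp (-η * b) * (1 / (a * b ^ 2)) =
        d * (Real.exp (-η * a) * Real.exp (-η * b)) / (d * (a * b ^ 2)) := by
      field_simp
    have hrhs : (1 / d) * (3 / 2 * (Real.exp (-η * b) / b ^ 2) +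
        1 / 2 * (Real.exp (-η * a) / a ^ 2)) =
        (3 / 2 * Real.exp (-η * b) * a + 1 / 2 * Real.exp (-η * a) * b ^ 2 / a) /
          (d * (a * b ^ 2)) := by
      field_simp
    rw [hlhs, hrhs]
    gcongr
  calc Real.exp (-s * a) / a * (Real.exp (-g * b) / b ^ 2)
      = (Real.exp (-s * a) * Real.exp (-g * b)) * (1 / (a * b ^ 2)) := by
        field_simp
    _ ≤ (Real.exp (-η * d) * (Real.exp (-η * a) * Real.exp (-η * b))) * (1 / (a * b ^ 2)) :=
        mul_le_mul_of_nonneg_right e1 (by positivity)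
    _ = Real.exp (-η * d) * (Real.exp (-η * a) * Real.exp (-η * b) * (1 / (a * b ^ 2))) := by
        ring
    _ ≤ Real.exp (-η * d) * ((1 / d) * (3 / 2 * (Real.exp (-η * b) / b ^ 2) +
          1 / 2 * (Real.exp (-η * a) / a ^ 2))) :=
        mul_le_mul_of_nonneg_left key (Real.exp_pos _).le
    _ = Real.exp (-η * d) / d * (3 / 2 * (Real.exp (-η * b) / b ^ 2) +
          1 / 2 * (Real.exp (-η * a) / a ^ 2)) := by ring

def Mstep (s : ℝ) : ℝ≥0∞ := 2 * I2 (s / 2) + 1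

lemma Mstep_ne_zero (s : ℝ) : Mstep s ≠ 0 := by simp [Mstep]

lemma Mstep_ne_top {s : ℝ} (hs : 0 < s) : Mstep s ≠ ∞ := by
  have := I2_lt_top (by positivity : (0:ℝ) < s / 2)
  simp only [Mstep]
  exact (ENNReal.add_ne_top).2 ⟨ENNReal.mul_ne_top (by norm_num) this.ne, one_ne_top⟩

lemma step_lemma {s g : ℝ} (hs : 0 < s) (hsg : s ≤ g) (X Y : E3) :
    ∫⁻ z : E3, Gker s X z * Fker g z Y ≤ Mstep s * Gker (s / 2) X Y := by
  by_cases hXY : X = Y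
  · subst hXY
    rw [Gker_self, ENNReal.mul_top (Mstep_ne_zero s)]
    exact le_top
  have hd : (0:ℝ) < ‖X - Y‖ := by simpa [sub_eq_zero] using hXY
  set f₁ : E3 → ℝ≥0∞ :=
    fun z => ENNReal.ofReal (3 / 2 * (Real.exp (-(s / 2) * ‖z - Y‖) / ‖z - Y‖ ^ 2)) with hf₁
  set f₂ : E3 → ℝ≥0∞ :=
    fun z => ENNReal.ofReal (1 / 2 * (Real.exp (-(s / 2) * ‖X - z‖) / ‖X - z‖ ^ 2)) with hf₂
  have hmf₁ : Measurable f₁ := by rw [hf₁]; fun_prop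
  have hmf₂ : Measurable f₂ := by rw [hf₂]; fun_prop
  have hnull : (volume : Measure E3) ({X} ∪ {Y}) = 0 :=
    le_antisymm ((measure_union_le _ _).trans (by simp)) zero_le
  have hae : ∀ᵐ z : E3, z ≠ X ∧ z ≠ Y := by
    have := measure_eq_zero_iff_ae_notMem.1 hnull
    filter_upwards [this] with z hz
    have h := not_or.1 (by simpa using hz)
    exact ⟨h.2, h.1⟩
  have pointwise : ∀ᵐ z : E3,
      Gker s X z * Fker g z Y ≤ Gker (s / 2) X Y * (f₁ z + f₂ z) := by
    filter_upwards [hae] with z hz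
    obtain ⟨hzX, hzY⟩ := hz
    have ha : (0:ℝ) < ‖X - z‖ := by simpa [sub_eq_zero] using (Ne.symm hzX)
    have hb : (0:ℝ) < ‖z - Y‖ := by simpa [sub_eq_zero] using hzY
    have htri : ‖X - Y‖ ≤ ‖X - z‖ + ‖z - Y‖ := by
      have := dist_triangle X z Y
      simpa [dist_eq_norm] using this
    rw [Gker_ne s (Ne.symm hzX), Fker_ne g hzY, Gker_ne (s / 2) hXY, hf₁, hf₂,
      ← ENNReal.ofReal_add (by positivity) (by positivity),
      ← ENNReal.ofReal_mul (by positivity), ← ENNReal.ofReal_mul (by positivity)]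
    exact ENNReal.ofReal_le_ofReal (real_ineq ha hb hd htri hs hsg)
  have hG_ne_top : Gker (s / 2) X Y ≠ ∞ := by
    rw [Gker_ne _ hXY]; exact ENNReal.ofReal_ne_top
  calc ∫⁻ z : E3, Gker s X z * Fker g z Y
      ≤ ∫⁻ z : E3, Gker (s / 2) X Y * (f₁ z + f₂ z) := lintegral_mono_ae pointwise
    _ = Gker (s / 2) X Y * ∫⁻ z : E3, (f₁ z + f₂ z) :=
        lintegral_const_mul' _ _ hG_ne_top
    _ = Gker (s / 2) X Y * ((∫⁻ z : E3, f₁ z) + ∫⁻ z : E3, f₂ z) := by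
        rw [lintegral_add_left hmf₁]
    _ = Gker (s / 2) X Y * (2 * I2 (s / 2)) := by
        have h1 : (∫⁻ z : E3, f₁ z) = ENNReal.ofReal (3 / 2) * I2 (s / 2) := by
          simp only [hf₁]
          rw [← lintegral_I2_shift (s / 2) Y, ← lintegral_const_mul' _ _
            (ENNReal.ofReal_ne_top : ENNReal.ofReal (3 / 2) ≠ ∞)]
          refine lintegral_congr fun z => ?_
          rw [← ENNReal.ofReal_mul (by positivity)]
        have h2 : (∫⁻ z : E3, f₂ z) = ENNReal.ofReal (1 / 2) * I2 (s / 2) := by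
          simp only [hf₂]
          rw [← lintegral_I2_shift (s / 2) X, ← lintegral_const_mul' _ _
            (ENNReal.ofReal_ne_top : ENNReal.ofReal (1 / 2) ≠ ∞)]
          refine lintegral_congr fun z => ?_
          rw [← ENNReal.ofReal_mul (by positivity), norm_sub_rev]
        rw [h1, h2, ← add_mul, ← ENNReal.ofReal_add (by positivity) (by positivity)]
        norm_num
    _ ≤ Mstep s * Gker (s / 2) X Y := by
        rw [mul_comm, Mstep]
        exact mul_le_mul_left (self_le_add_right _ _) _

lemma chain_zero (x y : E3) {k : ℕ} (z : Fin k → E3) : chain x y z 0 = x := by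
  simp [chain]

lemma chain_cons (x y z₀ : E3) {k : ℕ} (w : Fin k → E3) (i : ℕ) :
    chain x y (Fin.cons z₀ w) (i + 1) = chain z₀ y w i := by
  rcases i with _ | i
  · simp [chain]
  · by_cases h : i + 1 ≤ k
    · rw [chain, dif_pos ⟨by omega, by omega⟩, chain, dif_pos ⟨by omega, h⟩]
      exact Fin.cons_succ (α := fun _ : Fin (k + 1) => E3) z₀ w ⟨i, Nat.lt_of_lt_of_le (Nat.lt_succ_self i) h⟩
    · rw [chain, dif_neg (by omega), chain, dif_neg (by omega)]
      simp

lemma chain_indep (x x' y : E3) {k : ℕ} (w : Fin k → E3) (i : ℕ) (hi : 1 ≤ i) :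
    chain x y w i = chain x' y w i := by
  unfold chain
  split_ifs with h1 h2
  · rfl
  · omega
  · rfl

lemma measurable_chain (x y : E3) {k : ℕ} (i : ℕ) :
    Measurable fun z : Fin k → E3 => chain x y z i := by
  unfold chain
  split_ifs
  · exact measurable_pi_apply _
  · exact measurable_const
  · exact measurable_const

lemma measurable_cons {k : ℕ} :
    Measurable fun p : E3 × (Fin k → E3) => (Fin.cons p.1 p.2 : Fin (k + 1) → E3) := by
  refine measurable_pi_iff.2 fun j => ?_
  induction j using Fin.cases with
  | zero => simpa using measurable_fst
  | succ i => simpa [Function.comp_def] using (measurable_pi_apply i).comp measurable_snd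

lemma measurable_Phi {k : ℕ} (s g : ℝ) (x y : E3) :
    Measurable fun z : Fin k → E3 => Gker s x (chain x y z 1) *
      ∏ i ∈ Finset.range k, Fker g (chain x y z (i + 1)) (chain x y z (i + 2)) := by
  refine Measurable.mul ?_ ?_
  · exact Measurable.gker measurable_const (measurable_chain x y 1) s
  · refine Finset.measurable_prod _ fun i _ => ?_
    exact Measurable.fker (measurable_chain x y (i + 1)) (measurable_chain x y (i + 2)) g

lemma chain_bound {g : ℝ} (hg0 : 0 < g) : ∀ (k : ℕ) (s : ℝ), 0 < s → s ≤ g → ∀ x y : E3,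
    ∫⁻ z : Fin k → E3, Gker s x (chain x y z 1) *
        ∏ i ∈ Finset.range k, Fker g (chain x y z (i + 1)) (chain x y z (i + 2)) ≤
      (∏ j ∈ Finset.range k, Mstep (s / 2 ^ j)) * Gker (s / 2 ^ k) x y := by
  intro k
  induction k with
  | zero =>
    intro s hs hsg x y
    have h1 : ∀ z : Fin 0 → E3, chain x y z 1 = y := fun z => by simp [chain]
    simp only [h1, Finset.range_zero, Finset.prod_empty, mul_one, pow_zero, div_one, one_mul]
    rw [lintegral_const]
    have : (volume : Measure (Fin 0 → E3)) univ = 1 := by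
      rw [volume_pi, Measure.pi_univ]
      simp
    rw [this, mul_one]
  | succ k ih =>
    intro s hs hsg x y
    have hs2 : 0 < s / 2 := by positivity
    have hs2g : s / 2 ≤ g := by linarith
    set Φ : (Fin (k + 1) → E3) → ℝ≥0∞ := fun z => Gker s x (chain x y z 1) *
      ∏ i ∈ Finset.range (k + 1), Fker g (chain x y z (i + 1)) (chain x y z (i + 2)) with hΦ
    have hΦm : Measurable Φ := measurable_Phi s g x y
    have hsplit : ∫⁻ z : Fin (k + 1) → E3, Φ z =
        ∫⁻ w : Fin k → E3, ∫⁻ z₀ : E3, Φ (Fin.cons z₀ w) := by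
      have mp := (measurePreserving_piFinSuccAbove
        (fun _ : Fin (k + 1) => (volume : Measure E3)) 0).symm
      rw [volume_pi, ← mp.map_eq, lintegral_map_equiv,
        lintegral_prod_symm (fun p : E3 × (Fin k → E3) =>
          Φ ((MeasurableEquiv.piFinSuccAbove (fun _ : Fin (k + 1) => E3) 0).symm p))
          (by exact (hΦm.comp (MeasurableEquiv.piFinSuccAbove
            (fun _ : Fin (k + 1) => E3) 0).symm.measurable).aemeasurable),
        ← volume_pi]
      refine lintegral_congr fun w => lintegral_congr fun z₀ => ?_
      congr 1
      simp [MeasurableEquiv.piFinSuccAbove, Fin.consEquiv]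
    rw [hsplit]
    have hinner : ∀ w : Fin k → E3, ∀ z₀ : E3, Φ (Fin.cons z₀ w) =
        (Gker s x z₀ * Fker g z₀ (chain x y w 1)) *
          ∏ i ∈ Finset.range k, Fker g (chain x y w (i + 1)) (chain x y w (i + 2)) := by
      intro w z₀
      rw [hΦ]
      simp only [chain_cons]
      rw [Finset.prod_range_succ']
      have h0 : chain z₀ y w 0 = z₀ := chain_zero _ _ _
      have hind : ∀ i : ℕ, chain z₀ y w (i + 1) = chain x y w (i + 1) := fun i =>
        chain_indep _ _ _ _ _ (by omega)
      rw [h0]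
      simp only [hind]
      ring
    calc ∫⁻ w : Fin k → E3, ∫⁻ z₀ : E3, Φ (Fin.cons z₀ w)
        ≤ ∫⁻ w : Fin k → E3, Mstep s * (Gker (s / 2) x (chain x y w 1) *
            ∏ i ∈ Finset.range k, Fker g (chain x y w (i + 1)) (chain x y w (i + 2))) := by
          refine lintegral_mono fun w => ?_
          have hm : Measurable fun z₀ : E3 =>
              Gker s x z₀ * Fker g z₀ (chain x y w 1) := by
            exact Measurable.mul (Measurable.gker measurable_const measurable_id s)
              (Measurable.fker measurable_id measurable_const g)
          calc ∫⁻ z₀ : E3, Φ (Fin.cons z₀ w)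
              = (∫⁻ z₀ : E3, Gker s x z₀ * Fker g z₀ (chain x y w 1)) *
                  ∏ i ∈ Finset.range k,
                    Fker g (chain x y w (i + 1)) (chain x y w (i + 2)) := by
                simp only [hinner w]
                rw [lintegral_mul_const _ hm]
            _ ≤ (Mstep s * Gker (s / 2) x (chain x y w 1)) *
                  ∏ i ∈ Finset.range k,
                    Fker g (chain x y w (i + 1)) (chain x y w (i + 2)) :=
                mul_le_mul_left (step_lemma hs hsg x (chain x y w 1)) _
            _ = Mstep s * (Gker (s / 2) x (chain x y w 1) *
                  ∏ i ∈ Finset.range k,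
                    Fker g (chain x y w (i + 1)) (chain x y w (i + 2))) := by
                rw [mul_assoc]
      _ = Mstep s * ∫⁻ w : Fin k → E3, Gker (s / 2) x (chain x y w 1) *
            ∏ i ∈ Finset.range k, Fker g (chain x y w (i + 1)) (chain x y w (i + 2)) :=
          lintegral_const_mul' _ _ (Mstep_ne_top hs)
      _ ≤ Mstep s * ((∏ j ∈ Finset.range k, Mstep (s / 2 / 2 ^ j)) *
            Gker (s / 2 / 2 ^ k) x y) :=
          mul_le_mul_right (ih (s / 2) hs2 hs2g x y) _
      _ = (∏ j ∈ Finset.range (k + 1), Mstep (s / 2 ^ j)) * Gker (s / 2 ^ (k + 1)) x y := by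
          have hdiv : ∀ j : ℕ, s / 2 / 2 ^ j = s / 2 ^ (j + 1) := fun j => by
            rw [div_div, ← pow_succ']
          simp only [hdiv]
          rw [Finset.prod_range_succ']
          have h0 : s / 2 ^ 0 = s := by norm_num
          rw [h0, ← mul_assoc, mul_comm (Mstep s)]


theorem iterated_kernel_bound_sing
    (K₁ K₂ : E3 → E3 → ℂ) (c γ : ℝ) (hc : 0 < c) (hγ : 0 < γ)
    (hK₁ : Measurable (Function.uncurry K₁)) (hK₂ : Measurable (Function.uncurry K₂))
    (hb₁ : ∀ x y : E3, x ≠ y → ‖K₁ x y‖ ≤ c * Real.exp (-γ * ‖x - y‖) / ‖x - y‖)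
    (hb₂ : ∀ x y : E3, x ≠ y → ‖K₂ x y‖ ≤ c * Real.exp (-γ * ‖x - y‖) / ‖x - y‖ ^ 2) :
    ∀ k : ℕ, 2 ≤ k → ∃ C > 0, ∀ x y : E3, x ≠ y →
      ∫⁻ z : Fin k → E3,
          (‖K₁ (chain x y z 0) (chain x y z 1)‖₊ : ℝ≥0∞) *
            ∏ i ∈ Finset.range k,
              (‖K₂ (chain x y z (i + 1)) (chain x y z (i + 2))‖₊ : ℝ≥0∞) ≤
        ENNReal.ofReal (C / γ ^ k * Real.exp (-(γ / 2 ^ k) * ‖x - y‖) / ‖x - y‖) := by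
  intro k hk
  set c' : ℝ≥0∞ := ENNReal.ofReal c with hc'
  have hc'0 : c' ≠ 0 := by
    simp only [hc', ne_eq, ENNReal.ofReal_eq_zero, not_le]; exact hc
  have hc't : c' ≠ ∞ := ENNReal.ofReal_ne_top
  set D : ℝ≥0∞ := c' ^ (k + 1) * ∏ j ∈ Finset.range k, Mstep (γ / 2 ^ j) with hD
  have hDfin : D ≠ ∞ := by
    refine ENNReal.mul_ne_top (ENNReal.pow_ne_top hc't) ?_
    rw [← lt_top_iff_ne_top]
    refine ENNReal.prod_lt_top fun j _ => ?_
    exact (Mstep_ne_top (by positivity)).lt_top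
  set A : ℝ := D.toReal with hA
  have hA0 : 0 ≤ A := ENNReal.toReal_nonneg
  refine ⟨(A + 1) * γ ^ k, by positivity, ?_⟩
  intro x y hxy
  have hCγ : (A + 1) * γ ^ k / γ ^ k = A + 1 :=
    mul_div_cancel_right₀ _ (pow_ne_zero k hγ.ne')
  have hK1b : ∀ u v : E3, (‖K₁ u v‖₊ : ℝ≥0∞) ≤ c' * Gker γ u v := by
    intro u v
    by_cases huv : u = v
    · subst huv
      rw [Gker_self, ENNReal.mul_top hc'0]
      exact le_top
    · rw [Gker_ne _ huv, hc', ← ENNReal.ofReal_mul hc.le, ← enorm_eq_nnnorm, ← ofReal_norm]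
      refine ENNReal.ofReal_le_ofReal ?_
      rw [← mul_div_assoc]
      exact hb₁ u v huv
  have hK2b : ∀ u v : E3, (‖K₂ u v‖₊ : ℝ≥0∞) ≤ c' * Fker γ u v := by
    intro u v
    by_cases huv : u = v
    · subst huv
      have : Fker γ u u = ∞ := by
        simp [Fker, ENNReal.div_zero, Real.exp_pos]
      rw [this, ENNReal.mul_top hc'0]
      exact le_top
    · rw [Fker_ne _ huv, hc', ← ENNReal.ofReal_mul hc.le, ← enorm_eq_nnnorm, ← ofReal_norm]
      refine ENNReal.ofReal_le_ofReal ?_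
      rw [← mul_div_assoc]
      exact hb₂ u v huv
  calc ∫⁻ z : Fin k → E3,
        (‖K₁ (chain x y z 0) (chain x y z 1)‖₊ : ℝ≥0∞) *
          ∏ i ∈ Finset.range k,
            (‖K₂ (chain x y z (i + 1)) (chain x y z (i + 2))‖₊ : ℝ≥0∞)
      ≤ ∫⁻ z : Fin k → E3, c' ^ (k + 1) * (Gker γ x (chain x y z 1) *
          ∏ i ∈ Finset.range k, Fker γ (chain x y z (i + 1)) (chain x y z (i + 2))) := by
        refine lintegral_mono fun z => ?_
        have h1 : (‖K₁ (chain x y z 0) (chain x y z 1)‖₊ : ℝ≥0∞) ≤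
            c' * Gker γ x (chain x y z 1) := by
          rw [← chain_zero x y z]
          exact hK1b _ _
        have h2 : ∏ i ∈ Finset.range k,
            (‖K₂ (chain x y z (i + 1)) (chain x y z (i + 2))‖₊ : ℝ≥0∞) ≤
            ∏ i ∈ Finset.range k,
              (c' * Fker γ (chain x y z (i + 1)) (chain x y z (i + 2))) :=
          Finset.prod_le_prod' fun i _ => hK2b _ _
        refine le_trans (mul_le_mul' h1 h2) (le_of_eq ?_)
        rw [Finset.prod_mul_distrib, Finset.prod_const, Finset.card_range]
        ring
    _ = c' ^ (k + 1) * ∫⁻ z : Fin k → E3, Gker γ x (chain x y z 1) *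
          ∏ i ∈ Finset.range k, Fker γ (chain x y z (i + 1)) (chain x y z (i + 2)) :=
        lintegral_const_mul' _ _ (ENNReal.pow_ne_top hc't)
    _ ≤ c' ^ (k + 1) * ((∏ j ∈ Finset.range k, Mstep (γ / 2 ^ j)) * Gker (γ / 2 ^ k) x y) :=
        mul_le_mul_right (chain_bound hγ k γ hγ le_rfl x y) _
    _ = D * Gker (γ / 2 ^ k) x y := by rw [hD, mul_assoc]
    _ ≤ ENNReal.ofReal ((A + 1) * γ ^ k / γ ^ k *
          Real.exp (-(γ / 2 ^ k) * ‖x - y‖) / ‖x - y‖) := by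
        rw [hCγ, Gker_ne _ hxy, ← ENNReal.ofReal_toReal hDfin, ← hA,
          ← ENNReal.ofReal_mul hA0]
        refine ENNReal.ofReal_le_ofReal ?_
        rw [mul_div_assoc]
        have hd : (0:ℝ) < ‖x - y‖ := by simpa [sub_eq_zero] using hxy
        have hquot : (0:ℝ) ≤ Real.exp (-(γ / 2 ^ k) * ‖x - y‖) / ‖x - y‖ := by positivity
        nlinarith
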